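/- arXiv:2307.05407 — 2 statements merged into one kernel-verified Lean document; each statement's English description precedes it below -/
import Mathlib

section
/- For any γ > 0 and m > 0, the constant c_γ(m) defined by c_γ(m) = (1/π) ∫₀^∞ e^{(γ²/2 − γm)t} Φ((m−γ)√t) dt equals 1/(π γ m), where Φ is the standard Gaussian cumulative distribution function. -/
open MeasureTheory Set

open Filter Topology

/-- Standard normal cumulative distribution function `Φ`. -/
noncomputable def stdNormalCDF (x : ℝ) : ℝ :=
  ∫ u in Iic x, Real.exp (-(u ^ 2) / 2) / Real.sqrt (2 * Real.pi)

noncomputable def gφ (u : ℝ) : ℝ := Real.exp (-(u ^ 2) / 2) / Real.sqrt (2 * Real.pi)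

lemma gφ_eq (u : ℝ) : gφ u = (Real.sqrt (2 * Real.pi))⁻¹ * Real.exp (-(1/2) * u ^ 2) := by
  rw [gφ]; ring_nf

lemma gφ_nonneg (u : ℝ) : 0 ≤ gφ u :=
  div_nonneg (Real.exp_pos _).le (Real.sqrt_nonneg _)

lemma gφ_neg (u : ℝ) : gφ (-u) = gφ u := by simp [gφ]

lemma continuous_gφ : Continuous gφ := by
  unfold gφ; fun_prop

lemma integrable_gφ : Integrable gφ := by
  have : Integrable (fun u : ℝ => (Real.sqrt (2 * Real.pi))⁻¹ * Real.exp (-(1/2) * u ^ 2)) :=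
    (integrable_exp_neg_mul_sq (by norm_num : (0:ℝ) < 1/2)).const_mul _
  exact this.congr (by filter_upwards with u using (gφ_eq u).symm)

lemma sqrt_two_pi_pos : 0 < Real.sqrt (2 * Real.pi) :=
  Real.sqrt_pos.2 (by positivity)

lemma integral_gφ : ∫ u, gφ u = 1 := by
  have h : ∫ u : ℝ, Real.exp (-(1/2) * u ^ 2) = Real.sqrt (Real.pi / (1/2)) :=
    integral_gaussian (1/2)
  have : ∫ u, gφ u = (Real.sqrt (2 * Real.pi))⁻¹ * ∫ u : ℝ, Real.exp (-(1/2) * u ^ 2) := by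
    rw [← integral_const_mul]; congr 1; funext u; exact gφ_eq u
  rw [this, h]
  rw [show Real.pi / (1/2) = 2 * Real.pi by ring]
  field_simp

lemma stdNormalCDF_eq (x : ℝ) : stdNormalCDF x = ∫ u in Iic x, gφ u := rfl

lemma stdNormalCDF_nonneg (x : ℝ) : 0 ≤ stdNormalCDF x :=
  setIntegral_nonneg measurableSet_Iic fun u _ => gφ_nonneg u

lemma stdNormalCDF_le_one (x : ℝ) : stdNormalCDF x ≤ 1 := by
  rw [← integral_gφ, stdNormalCDF_eq]
  exact setIntegral_le_integral integrable_gφ (by filter_upwards with u using gφ_nonneg u)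

lemma integral_gφ_Iic_zero : ∫ u in Iic (0:ℝ), gφ u = 1/2 := by
  have h1 : ∫ u in Iic (0:ℝ), gφ u = ∫ u in Ioi (0:ℝ), gφ u := by
    have := integral_comp_neg_Iic 0 gφ
    simp_rw [gφ_neg, neg_zero] at this
    exact this
  have h2 : (∫ u in Iic (0:ℝ), gφ u) + ∫ u in Ioi (0:ℝ), gφ u = 1 := by
    rw [← integral_gφ, ← compl_Iic]
    exact integral_add_compl measurableSet_Iic integrable_gφ
  linarith

lemma stdNormalCDF_zero : stdNormalCDF 0 = 1/2 := integral_gφ_Iic_zero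

lemma integral_gφ_Ioi_zero : ∫ u in Ioi (0:ℝ), gφ u = 1/2 := by
  have h2 : (∫ u in Iic (0:ℝ), gφ u) + ∫ u in Ioi (0:ℝ), gφ u = 1 := by
    rw [← integral_gφ, ← compl_Iic]
    exact integral_add_compl measurableSet_Iic integrable_gφ
  rw [integral_gφ_Iic_zero] at h2; linarith

lemma hasDerivAt_stdNormalCDF (x : ℝ) : HasDerivAt stdNormalCDF (gφ x) x := by
  have key : ∀ y : ℝ, stdNormalCDF y = stdNormalCDF 0 + ∫ u in (0:ℝ)..y, gφ u := by
    intro y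
    have := intervalIntegral.integral_Iic_sub_Iic (integrable_gφ.integrableOn (s := Iic 0))
      (integrable_gφ.integrableOn (s := Iic y))
    rw [stdNormalCDF_eq, stdNormalCDF_eq]
    linarith [this]
  have : HasDerivAt (fun y => stdNormalCDF 0 + ∫ u in (0:ℝ)..y, gφ u) (gφ x) x := by
    refine HasDerivAt.const_add _ ?_
    exact intervalIntegral.integral_hasDerivAt_right
      (integrable_gφ.intervalIntegrable)
      (continuous_gφ.stronglyMeasurable.stronglyMeasurableAtFilter)
      continuous_gφ.continuousAt
  exact this.congr_of_eventuallyEq (by filter_upwards with y using key y)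

lemma continuous_stdNormalCDF : Continuous stdNormalCDF :=
  continuous_iff_continuousAt.2 fun x => (hasDerivAt_stdNormalCDF x).continuousAt

lemma tendsto_stdNormalCDF_atTop : Tendsto stdNormalCDF atTop (𝓝 1) := by
  have h : Tendsto (fun y => ∫ u in (0:ℝ)..y, gφ u) atTop (𝓝 (∫ u in Ioi (0:ℝ), gφ u)) :=
    intervalIntegral_tendsto_integral_Ioi 0 integrable_gφ.integrableOn tendsto_id
  have h2 : Tendsto (fun y => stdNormalCDF 0 + ∫ u in (0:ℝ)..y, gφ u) atTop
      (𝓝 (stdNormalCDF 0 + ∫ u in Ioi (0:ℝ), gφ u)) := tendsto_const_nhds.add h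
  rw [stdNormalCDF_zero, integral_gφ_Ioi_zero] at h2
  norm_num at h2
  refine h2.congr fun y => ?_
  have := intervalIntegral.integral_Iic_sub_Iic (integrable_gφ.integrableOn (s := Iic 0))
    (integrable_gφ.integrableOn (s := Iic y))
  rw [stdNormalCDF_eq]
  linarith [integral_gφ_Iic_zero]

lemma stdNormalCDF_le_exp {x : ℝ} (hx : x ≤ 0) :
    stdNormalCDF x ≤ Real.exp (-(x ^ 2) / 2) / 2 := by
  have hshift : ∫ u in Iic x, gφ (u - x) = ∫ u in Iic (0:ℝ), gφ u := by
    calc ∫ u in Iic x, gφ (u - x)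
        = ∫ u, (Iic x).indicator (fun u => gφ (u - x)) u := by
          rw [integral_indicator measurableSet_Iic]
      _ = ∫ u, (Iic (0:ℝ)).indicator gφ (u - x) := by
          congr 1; funext u
          simp only [indicator_apply, mem_Iic, sub_nonpos]
      _ = ∫ u, (Iic (0:ℝ)).indicator gφ u := by
          exact integral_sub_right_eq_self _ x
      _ = ∫ u in Iic (0:ℝ), gφ u := integral_indicator measurableSet_Iic
  have hmono : stdNormalCDF x ≤ ∫ u in Iic x, Real.exp (-(x ^ 2) / 2) * gφ (u - x) := by
    rw [stdNormalCDF_eq]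
    refine setIntegral_mono_on integrable_gφ.integrableOn
      (((integrable_gφ.comp_sub_right x).const_mul _).integrableOn) measurableSet_Iic ?_
    intro u hu
    simp only [mem_Iic] at hu
    unfold gφ
    rw [mul_div_assoc', div_le_div_iff_of_pos_right sqrt_two_pi_pos, ← Real.exp_add]
    apply Real.exp_le_exp.2
    nlinarith
  calc stdNormalCDF x ≤ ∫ u in Iic x, Real.exp (-(x ^ 2) / 2) * gφ (u - x) := hmono
    _ = Real.exp (-(x ^ 2) / 2) * ∫ u in Iic x, gφ (u - x) := by
        rw [← integral_const_mul]
    _ = Real.exp (-(x ^ 2) / 2) / 2 := by rw [hshift, integral_gφ_Iic_zero]; ring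

lemma hasDerivAt_gφ (x : ℝ) : HasDerivAt gφ (-x * gφ x) x := by
  have h1 : HasDerivAt (fun x : ℝ => -(x ^ 2) / 2) (-x) x := by
    have := ((hasDerivAt_pow 2 x).neg).div_const 2
    refine this.congr_deriv (Eq.symm ?_)
    simp; ring
  have h2 := (h1.exp).div_const (Real.sqrt (2 * Real.pi))
  refine h2.congr_deriv (Eq.symm ?_)
  unfold gφ; ring

lemma tendsto_one_add_mul_exp {a : ℝ} (ha : 0 < a) :
    Tendsto (fun t : ℝ => (1 + t) * Real.exp (-(a * t))) atTop (𝓝 0) := by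
  have h1 : Tendsto (fun x : ℝ => x * Real.exp (-x)) atTop (𝓝 0) := by
    simpa using Real.tendsto_pow_mul_exp_neg_atTop_nhds_zero 1
  have h2 : Tendsto (fun t : ℝ => a * t) atTop atTop :=
    Tendsto.const_mul_atTop ha tendsto_id
  have h3 : Tendsto (fun t : ℝ => (a * t) * Real.exp (-(a * t))) atTop (𝓝 0) := h1.comp h2
  have h4 : Tendsto (fun t : ℝ => Real.exp (-(a * t))) atTop (𝓝 0) :=
    Real.tendsto_exp_atBot.comp (tendsto_neg_atBot_iff.mpr h2)
  have h5 : Tendsto (fun t : ℝ => Real.exp (-(a * t)) + a⁻¹ * ((a * t) * Real.exp (-(a * t))))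
      atTop (𝓝 (0 + a⁻¹ * 0)) := h4.add (h3.const_mul _)
  norm_num at h5
  refine h5.congr fun t => ?_
  field_simp

lemma sqrt_le_one_add {t : ℝ} (ht : 0 ≤ t) : Real.sqrt t ≤ 1 + t := by
  nlinarith [Real.sq_sqrt ht, Real.sqrt_nonneg t]

lemma tendsto_sqrt_atTop : Tendsto Real.sqrt atTop atTop := by
  rw [show Real.sqrt = fun x : ℝ => x ^ (1/2:ℝ) from funext fun x => Real.sqrt_eq_rpow x]
  exact tendsto_rpow_atTop (by norm_num)

lemma hasDerivAt_cdf_sqrt (a : ℝ) {x : ℝ} (hx : 0 < x) :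
    HasDerivAt (fun t => stdNormalCDF (a * Real.sqrt t))
      (gφ (a * Real.sqrt x) * (a * (1 / (2 * Real.sqrt x)))) x :=
  (hasDerivAt_stdNormalCDF _).comp x ((Real.hasDerivAt_sqrt hx.ne').const_mul a)

/-- **Evaluation of the constant `c_γ(m)`.** For any `γ, m > 0`,
`(1/π) ∫₀^∞ exp((γ²/2 - γ m) t) Φ((m - γ) √t) dt = 1/(π γ m)`. -/
theorem stmt3 (γ m : ℝ) (hγ : 0 < γ) (hm : 0 < m) :
    (1 / Real.pi) *
        ∫ t in Ioi (0 : ℝ),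
          Real.exp ((γ ^ 2 / 2 - γ * m) * t) * stdNormalCDF ((m - γ) * Real.sqrt t) =
      1 / (Real.pi * γ * m) := by
  obtain ⟨c, hc⟩ : ∃ c : ℝ, c = γ ^ 2 / 2 - γ * m := ⟨_, rfl⟩
  obtain ⟨b, hb⟩ : ∃ b : ℝ, b = m - γ := ⟨_, rfl⟩
  rw [← hc, ← hb]
  have hm' : m ≠ 0 := hm.ne'
  have hγ' : γ ≠ 0 := hγ.ne'
  -- main computation
  suffices h : ∫ t in Ioi (0 : ℝ), Real.exp (c * t) * stdNormalCDF (b * Real.sqrt t)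
      = 1 / (γ * m) by
    rw [h]
    rw [div_mul_div_comm, one_mul, mul_assoc]
  -- shared facts
  have hbm : b ^ 2 = 2 * c + m ^ 2 := by rw [hb, hc]; ring
  have hid : ∀ x : ℝ, 0 ≤ x →
      Real.exp (c * x) * gφ (b * Real.sqrt x) = gφ (m * Real.sqrt x) := by
    intro x hx
    have hexp : Real.exp (c * x) * Real.exp (-(1/2) * (b ^ 2 * x))
        = Real.exp (-(1/2) * (m ^ 2 * x)) := by
      rw [← Real.exp_add]; congr 1; rw [hbm]; ring
    rw [gφ_eq, gφ_eq, mul_pow, mul_pow, Real.sq_sqrt hx, mul_left_comm, hexp]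
  have hΦb_cont : Continuous fun t => stdNormalCDF (b * Real.sqrt t) :=
    continuous_stdNormalCDF.comp (continuous_const.mul Real.continuous_sqrt)
  have hΦm_cont : Continuous fun t => stdNormalCDF (m * Real.sqrt t) :=
    continuous_stdNormalCDF.comp (continuous_const.mul Real.continuous_sqrt)
  have hf_cont : Continuous fun t => Real.exp (c * t) * stdNormalCDF (b * Real.sqrt t) :=
    (Real.continuous_exp.comp (continuous_const.mul continuous_id)).mul hΦb_cont
  have hf_nonneg : ∀ t : ℝ, 0 ≤ Real.exp (c * t) * stdNormalCDF (b * Real.sqrt t) :=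
    fun t => mul_nonneg (Real.exp_pos _).le (stdNormalCDF_nonneg _)
  have hbound : ∀ t : ℝ, 0 ≤ t → b ≤ 0 →
      Real.exp (c * t) * stdNormalCDF (b * Real.sqrt t)
        ≤ Real.exp (-(m ^ 2 / 2) * t) / 2 := by
    intro t ht hbneg
    have h1 : b * Real.sqrt t ≤ 0 := mul_nonpos_of_nonpos_of_nonneg hbneg (Real.sqrt_nonneg t)
    have h2 := stdNormalCDF_le_exp h1
    calc Real.exp (c * t) * stdNormalCDF (b * Real.sqrt t)
        ≤ Real.exp (c * t) * (Real.exp (-((b * Real.sqrt t) ^ 2) / 2) / 2) := by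
          exact mul_le_mul_of_nonneg_left h2 (Real.exp_pos _).le
      _ = Real.exp (-(m ^ 2 / 2) * t) / 2 := by
          rw [← mul_div_assoc, ← Real.exp_add, mul_pow, Real.sq_sqrt ht]
          congr 2
          rw [show b ^ 2 = 2 * c + m ^ 2 from hbm]; ring
  have hcase : c < 0 ∨ b ≤ 0 := by
    rcases lt_or_ge γ (2 * m) with h | h
    · left; rw [hc]; nlinarith
    · right; rw [hb]; linarith
  -- integrability
  have hint : IntegrableOn (fun t => Real.exp (c * t) * stdNormalCDF (b * Real.sqrt t))
      (Ioi (0:ℝ)) := by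
    rcases hcase with hcneg | hbneg
    · have hg : IntegrableOn (fun t : ℝ => Real.exp (c * t)) (Ioi (0:ℝ)) := by
        have := exp_neg_integrableOn_Ioi 0 (show (0:ℝ) < -c by linarith)
        exact this.congr_fun (fun x _ => by ring_nf) measurableSet_Ioi
      refine hg.mono' hf_cont.aestronglyMeasurable.restrict ?_
      filter_upwards with t
      rw [Real.norm_eq_abs, abs_of_nonneg (hf_nonneg t)]
      calc Real.exp (c * t) * stdNormalCDF (b * Real.sqrt t)
          ≤ Real.exp (c * t) * 1 :=
            mul_le_mul_of_nonneg_left (stdNormalCDF_le_one _) (Real.exp_pos _).le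
        _ = Real.exp (c * t) := mul_one _
    · have hg : IntegrableOn (fun t : ℝ => Real.exp (-(m ^ 2 / 2) * t) / 2) (Ioi (0:ℝ)) :=
        (exp_neg_integrableOn_Ioi 0 (by positivity : (0:ℝ) < m ^ 2 / 2)).div_const 2
      refine hg.mono' hf_cont.aestronglyMeasurable.restrict ?_
      filter_upwards [ae_restrict_mem measurableSet_Ioi] with t ht
      rw [Real.norm_eq_abs, abs_of_nonneg (hf_nonneg t)]
      exact hbound t (le_of_lt ht) hbneg
  -- limit of integrand at infinity
  have hf0 : Tendsto (fun t => Real.exp (c * t) * stdNormalCDF (b * Real.sqrt t))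
      atTop (𝓝 0) := by
    rcases hcase with hcneg | hbneg
    · have hg : Tendsto (fun t : ℝ => Real.exp (c * t)) atTop (𝓝 0) := by
        apply Real.tendsto_exp_atBot.comp
        have : Tendsto (fun t : ℝ => -(-c * t)) atTop atBot :=
          tendsto_neg_atBot_iff.mpr (Tendsto.const_mul_atTop (by linarith) tendsto_id)
        exact this.congr fun t => by ring
      refine squeeze_zero (fun t => hf_nonneg t) (fun t => ?_) hg
      calc Real.exp (c * t) * stdNormalCDF (b * Real.sqrt t)
          ≤ Real.exp (c * t) * 1 :=
            mul_le_mul_of_nonneg_left (stdNormalCDF_le_one _) (Real.exp_pos _).le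
        _ = Real.exp (c * t) := mul_one _
    · have hg : Tendsto (fun t : ℝ => Real.exp (-(m ^ 2 / 2) * t) / 2) atTop (𝓝 0) := by
        have h2 : Tendsto (fun t : ℝ => (m ^ 2 / 2) * t) atTop atTop :=
          Tendsto.const_mul_atTop (by positivity) tendsto_id
        have h3 : Tendsto (fun t : ℝ => -((m ^ 2 / 2) * t)) atTop atBot :=
          tendsto_neg_atBot_iff.mpr h2
        have h1 : Tendsto (fun t : ℝ => Real.exp (-(m ^ 2 / 2) * t)) atTop (𝓝 0) :=
          (Real.tendsto_exp_atBot.comp h3).congr fun t => by rw [Function.comp_apply, neg_mul]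
        simpa using h1.div_const 2
      refine squeeze_zero' (Eventually.of_forall hf_nonneg) ?_ hg
      filter_upwards [eventually_ge_atTop (0:ℝ)] with t ht
      exact hbound t ht hbneg
  have hΦm_top : Tendsto (fun t => stdNormalCDF (m * Real.sqrt t)) atTop (𝓝 1) :=
    tendsto_stdNormalCDF_atTop.comp
      (Tendsto.const_mul_atTop hm tendsto_sqrt_atTop)
  by_cases hcz : c = 0
  · -- the case γ = 2m
    have hγ2m : γ = 2 * m := by
      rw [hc] at hcz
      have h0 : γ * (γ - 2 * m) = 0 := by nlinarith [hcz]
      rcases mul_eq_zero.1 h0 with h | h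
      · exact absurd h hγ'
      · linarith
    have hbm' : b = -m := by rw [hb, hγ2m]; ring
    set G : ℝ → ℝ := fun t => t * stdNormalCDF (b * Real.sqrt t)
      - (1/m) * (Real.sqrt t * gφ (m * Real.sqrt t))
      + (1/m^2) * stdNormalCDF (m * Real.sqrt t) with hG
    have hGcont : ContinuousWithinAt G (Ici 0) 0 := by
      apply Continuous.continuousWithinAt
      exact ((continuous_id.mul hΦb_cont).sub (continuous_const.mul
        (Real.continuous_sqrt.mul
          (continuous_gφ.comp (continuous_const.mul Real.continuous_sqrt))))).add
        (continuous_const.mul hΦm_cont)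
    have hGderiv : ∀ x ∈ Ioi (0:ℝ), HasDerivAt G
        (Real.exp (c * x) * stdNormalCDF (b * Real.sqrt x)) x := by
      intro x hx
      rw [mem_Ioi] at hx
      have hsxpos : 0 < Real.sqrt x := Real.sqrt_pos.2 hx
      have hsx : Real.sqrt x * Real.sqrt x = x := Real.mul_self_sqrt hx.le
      have hD1 := (hasDerivAt_id x).mul (hasDerivAt_cdf_sqrt b hx)
      have hD2 := (Real.hasDerivAt_sqrt hx.ne').mul
        ((hasDerivAt_gφ (m * Real.sqrt x)).comp x ((Real.hasDerivAt_sqrt hx.ne').const_mul m))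
      have hD3 := hasDerivAt_cdf_sqrt m hx
      have hD := (hD1.sub (hD2.const_mul (1/m))).add (hD3.const_mul (1/m^2))
      refine hD.congr_deriv (Eq.symm ?_)
      rw [hcz, hbm']
      simp only [neg_mul, gφ_neg, id_eq, Function.comp_apply, zero_mul, Real.exp_zero, one_mul]
      generalize hgs : Real.sqrt x = s at hsx hsxpos ⊢
      rw [← hsx]
      have hsne : s ≠ 0 := hsxpos.ne'
      field_simp
      ring
    have hT1 : Tendsto (fun t : ℝ => t * stdNormalCDF (b * Real.sqrt t)) atTop (𝓝 0) := by
      have hA : Tendsto (fun t : ℝ => ((1 + t) * Real.exp (-(m^2/2 * t))) * (1/2))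
          atTop (𝓝 (0 * (1/2))) :=
        (tendsto_one_add_mul_exp (by positivity : (0:ℝ) < m^2/2)).mul_const _
      rw [zero_mul] at hA
      refine squeeze_zero' ?_ ?_ hA
      · filter_upwards [eventually_ge_atTop (0:ℝ)] with t ht
        exact mul_nonneg ht (stdNormalCDF_nonneg _)
      · filter_upwards [eventually_ge_atTop (0:ℝ)] with t ht
        have h2 := hbound t ht (by rw [hbm']; linarith)
        rw [hcz, zero_mul, Real.exp_zero, one_mul] at h2
        have h3 : Real.exp (-(m ^ 2 / 2) * t) = Real.exp (-(m^2/2 * t)) := by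
          rw [neg_mul]
        rw [h3] at h2
        nlinarith [Real.exp_pos (-(m^2/2 * t)), stdNormalCDF_nonneg (b * Real.sqrt t)]
    have hT2 : Tendsto (fun t : ℝ => Real.sqrt t * gφ (m * Real.sqrt t)) atTop (𝓝 0) := by
      have hA : Tendsto (fun t : ℝ => ((1 + t) * Real.exp (-(m^2/2 * t)))
          * (Real.sqrt (2 * Real.pi))⁻¹) atTop (𝓝 (0 * (Real.sqrt (2 * Real.pi))⁻¹)) :=
        (tendsto_one_add_mul_exp (by positivity : (0:ℝ) < m^2/2)).mul_const _
      rw [zero_mul] at hA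
      refine squeeze_zero' ?_ ?_ hA
      · filter_upwards [eventually_ge_atTop (0:ℝ)] with t ht
        exact mul_nonneg (Real.sqrt_nonneg t) (gφ_nonneg _)
      · filter_upwards [eventually_ge_atTop (0:ℝ)] with t ht
        rw [gφ_eq, mul_pow, Real.sq_sqrt ht,
          show -(m^2/2 * t) = -(1/2) * (m^2 * t) by ring]
        have h5 := mul_le_mul_of_nonneg_right (sqrt_le_one_add ht)
          (le_of_lt (mul_pos (inv_pos.2 sqrt_two_pi_pos)
            (Real.exp_pos (-(1/2) * (m^2 * t)))))
        nlinarith [h5]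
    have hGtend : Tendsto G atTop (𝓝 ((0 - (1/m) * 0) + (1/m^2) * 1)) :=
      (hT1.sub (hT2.const_mul _)).add (hΦm_top.const_mul _)
    have key := integral_Ioi_of_hasDerivAt_of_tendsto hGcont hGderiv hint hGtend
    rw [key]
    have hG0 : G 0 = (1/m^2) * (1/2) := by
      rw [hG]
      simp [Real.sqrt_zero, stdNormalCDF_zero]
    rw [hG0, hγ2m]
    field_simp
    ring
  · -- the case γ ≠ 2m
    set F : ℝ → ℝ := fun t => (1/c) * (Real.exp (c * t) * stdNormalCDF (b * Real.sqrt t))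
      - b/(c*m) * stdNormalCDF (m * Real.sqrt t) with hF
    have hFcont : ContinuousWithinAt F (Ici 0) 0 := by
      apply Continuous.continuousWithinAt
      exact ((continuous_const.mul hf_cont).sub (continuous_const.mul hΦm_cont))
    have hFderiv : ∀ x ∈ Ioi (0:ℝ), HasDerivAt F
        (Real.exp (c * x) * stdNormalCDF (b * Real.sqrt x)) x := by
      intro x hx
      rw [mem_Ioi] at hx
      have hsxpos : 0 < Real.sqrt x := Real.sqrt_pos.2 hx
      have hA : HasDerivAt (fun t : ℝ => Real.exp (c * t)) (Real.exp (c * x) * (c * 1)) x :=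
        ((hasDerivAt_id x).const_mul c).exp
      have hD := ((hA.mul (hasDerivAt_cdf_sqrt b hx)).const_mul (1/c)).sub
        ((hasDerivAt_cdf_sqrt m hx).const_mul (b/(c*m)))
      refine hD.congr_deriv (Eq.symm ?_)
      rw [← hid x hx.le]
      field_simp
      ring
    have hFtend : Tendsto F atTop (𝓝 ((1/c) * 0 - b/(c*m) * 1)) :=
      (hf0.const_mul _).sub (hΦm_top.const_mul _)
    have key := integral_Ioi_of_hasDerivAt_of_tendsto hFcont hFderiv hint hFtend
    rw [key]
    have hF0 : F 0 = (1/c) * (1 * (1/2)) - b/(c*m) * (1/2) := by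
      rw [hF]
      simp [Real.sqrt_zero, stdNormalCDF_zero]
    have hcne : c ≠ 0 := hcz
    have hne : γ - 2 * m ≠ 0 := by
      intro h
      exact hcne (by rw [hc]; nlinarith)
    rw [hF0]
    have e : (1/c * 0 - b/(c*m) * 1) - (1/c * (1 * (1/2)) - b/(c*m) * (1/2))
        = (γ - 2*m) / (2*c*m) := by
      rw [hb]
      field_simp
      ring
    rw [e, hc, show 2*(γ^2/2 - γ*m)*m = (γ - 2*m) * (γ*m) by ring,
      ← div_div, div_self hne]
end

section
/- Polynomial approximation for Karamata's argument: for each α ≥ 0 and ε ∈ (0, 1/(2e)), there exist a constant C(α) < ∞ independent of ε and polynomials P₋, P₊ with P±(0) = 0 such that P₋(x) ≤ 1_{[e^{−1},1]}(x) ≤ P₊(x) for all x ∈ [0,1], and ∫₀¹ |P±(x) − 1_{[e^{−1},1]}(x)| · α (log(1/x))^{α−1} dx/x ≤ C(α) ε. -/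
open Set MeasureTheory

lemma aux_img : (fun t => Real.exp (-t)) '' (Ioi (0:ℝ)) = Ioo (0:ℝ) 1 := by
  ext y
  constructor
  · rintro ⟨t, ht, rfl⟩
    exact ⟨Real.exp_pos _, Real.exp_lt_one_iff.2 (by linarith [mem_Ioi.1 ht])⟩
  · rintro ⟨h0, h1⟩
    exact ⟨-Real.log y, by simpa using Real.log_neg h0 h1, by simp [Real.exp_log h0]⟩

lemma aux_int {β : ℝ} (hβ : 0 < β) :
    IntegrableOn (fun x => Real.log (1/x) ^ (β-1)) (Ioc (0:ℝ) 1) volume ∧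
    ∫ x in Ioc (0:ℝ) 1, Real.log (1/x) ^ (β-1) = Real.Gamma β := by
  have hderiv : ∀ t ∈ Ioi (0:ℝ), HasDerivWithinAt (fun t => Real.exp (-t))
      (-Real.exp (-t)) (Ioi 0) t := by
    intro t _
    simpa [Function.comp_def] using ((Real.hasDerivAt_exp (-t)).comp t (hasDerivAt_neg' t)).hasDerivWithinAt
  have hinj : InjOn (fun t => Real.exp (-t)) (Ioi 0) := fun a _ b _ h => by
    have := Real.exp_injective h; linarith
  have hfun : (fun t => |(-Real.exp (-t))| • Real.log (1/(Real.exp (-t))) ^ (β-1))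
      = fun t => Real.exp (-t) * t ^ (β-1) := by
    funext t
    rw [abs_neg, abs_of_pos (Real.exp_pos _), smul_eq_mul, one_div, ← Real.exp_neg, neg_neg,
      Real.log_exp]
  have him := aux_img
  have hInt : IntegrableOn (fun x => Real.log (1/x) ^ (β-1)) (Ioo (0:ℝ) 1) volume := by
    rw [← him, integrableOn_image_iff_integrableOn_abs_deriv_smul measurableSet_Ioi hderiv hinj]
    simpa [hfun] using Real.GammaIntegral_convergent hβ
  have hEq : ∫ x in Ioo (0:ℝ) 1, Real.log (1/x) ^ (β-1) = Real.Gamma β := by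
    rw [← him, integral_image_eq_integral_abs_deriv_smul measurableSet_Ioi hderiv hinj,
      hfun, Real.Gamma_eq_integral hβ]
  constructor
  · exact hInt.congr_set_ae Ioo_ae_eq_Ioc.symm |>.congr_set_ae (by rfl)
  · rw [integral_Ioc_eq_integral_Ioo]; exact hEq

lemma aux_wmeas (α : ℝ) : Measurable (fun x : ℝ => α * Real.log (1/x) ^ (α-1) / x) := by
  exact ((measurable_const.mul ((Real.measurable_log.comp
    (measurable_const.div measurable_id)).pow_const _))).div measurable_id

lemma aux_key (α : ℝ) (hα : 0 < α) (ε c : ℝ) (hε : 0 < ε)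
    (hc1 : Real.exp (-1) / 2 ≤ c) (hc2 : c + ε ≤ 3 * Real.exp (-1) / 2)
    (f : ℝ → ℝ) (hf : Measurable f)
    (hbd : ∀ x ∈ Ioc (0:ℝ) 1, |f x| ≤ indicator (Icc c (c+ε)) (fun _ => (1:ℝ)) x + ε * x) :
    ∫ x in Ioc (0:ℝ) 1, |f x| * (α * Real.log (1/x) ^ (α-1) / x)
      ≤ (α * (2*Real.exp 1) * max ((Real.log (2*Real.exp 1/3)) ^ (α-1))
          ((Real.log (2*Real.exp 1)) ^ (α-1)) + Real.Gamma (α+1)) * ε := by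
  have hE : (2.7182818283 : ℝ) < Real.exp 1 := Real.exp_one_gt_d9
  set E := Real.exp 1 with hEdef
  have hEpos : 0 < E := Real.exp_pos 1
  have hb : Real.exp (-1) = E⁻¹ := by rw [Real.exp_neg]
  have hbpos : 0 < Real.exp (-1) := Real.exp_pos _
  set L := max ((Real.log (2*E/3)) ^ (α-1)) ((Real.log (2*E)) ^ (α-1)) with hLdef
  have hlog1 : 0 < Real.log (2*E/3) := Real.log_pos (by nlinarith)
  have hL0 : 0 ≤ L := le_max_of_le_left (Real.rpow_nonneg hlog1.le _)
  set K := α * (2*E) * L with hKdef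
  have hK0 : 0 ≤ K := by positivity
  set J := Icc c (c+ε) with hJdef
  set G : ℝ → ℝ := fun x => K * indicator J (fun _ => (1:ℝ)) x
      + ε * (α * Real.log (1/x) ^ (α-1)) with hGdef
  -- pointwise bound on Ioc 0 1
  have hpt : ∀ x ∈ Ioc (0:ℝ) 1, |f x| * (α * Real.log (1/x) ^ (α-1) / x) ≤ G x := by
    intro x hx
    obtain ⟨hx0, hx1⟩ := hx
    have hlx : 0 ≤ Real.log (1/x) := Real.log_nonneg (by rw [le_div_iff₀ hx0]; linarith)
    have hw0 : 0 ≤ α * Real.log (1/x) ^ (α-1) / x :=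
      div_nonneg (mul_nonneg hα.le (Real.rpow_nonneg hlx _)) hx0.le
    have h1 : |f x| * (α * Real.log (1/x) ^ (α-1) / x)
        ≤ (indicator J (fun _ => (1:ℝ)) x + ε * x) * (α * Real.log (1/x) ^ (α-1) / x) :=
      mul_le_mul_of_nonneg_right (hbd x ⟨hx0, hx1⟩) hw0
    refine h1.trans ?_
    rw [add_mul]
    have h2 : ε * x * (α * Real.log (1/x) ^ (α-1) / x) = ε * (α * Real.log (1/x) ^ (α-1)) := by
      field_simp
    rw [h2]
    have hGx : G x = K * indicator J (fun _ => (1:ℝ)) x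
        + ε * (α * Real.log (1/x) ^ (α-1)) := rfl
    rw [hGx]
    refine add_le_add ?_ le_rfl
    by_cases hxJ : x ∈ J
    · rw [indicator_of_mem hxJ, one_mul, mul_one]
      obtain ⟨hxc, hxc'⟩ := hxJ
      have hxb2 : E⁻¹/2 ≤ x := by have := hc1.trans hxc; rw [hb] at this; exact this
      have hxb3 : x ≤ 3 * E⁻¹/2 := by
        have := hxc'.trans hc2; rw [hb] at this; linarith
      have hEi : E * E⁻¹ = 1 := mul_inv_cancel₀ hEpos.ne'
      have hix1 : 1/x ≤ 2*E := by
        rw [div_le_iff₀ hx0]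
        nlinarith [mul_le_mul_of_nonneg_left hxb2 hEpos.le]
      have hix2 : 2*E/3 ≤ 1/x := by
        rw [le_div_iff₀ hx0]
        nlinarith [mul_le_mul_of_nonneg_left hxb3 hEpos.le]
      have htL : Real.log (1/x) ^ (α-1) ≤ L := by
        rcases le_or_gt 0 (α-1) with h | h
        · exact le_max_of_le_right (Real.rpow_le_rpow hlx
            (Real.log_le_log (by positivity) hix1) h)
        · exact le_max_of_le_left (Real.rpow_le_rpow_of_nonpos hlog1
            (Real.log_le_log (by positivity) hix2) h.le)
      calc α * Real.log (1/x) ^ (α-1) / x = α * (Real.log (1/x) ^ (α-1)) * (1/x) := by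
            ring
      _ ≤ α * L * (2*E) := by
            apply mul_le_mul (mul_le_mul_of_nonneg_left htL hα.le) hix1 (by positivity)
            positivity
      _ = K := by rw [hKdef]; ring
    · rw [indicator_of_notMem hxJ, zero_mul, mul_zero]
  -- integrability
  have hmJ : MeasurableSet J := measurableSet_Icc
  have hG1 : IntegrableOn (fun x => K * indicator J (fun _ => (1:ℝ)) x) (Ioc (0:ℝ) 1) := by
    refine Integrable.const_mul ?_ K
    exact (integrableOn_const (s := Ioc (0:ℝ) 1) (μ := volume) (C := (1:ℝ)) (by simp [Real.volume_Ioc])).indicator hmJ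
  have hG2 : IntegrableOn (fun x => ε * (α * Real.log (1/x) ^ (α-1))) (Ioc (0:ℝ) 1) :=
    ((aux_int hα).1.const_mul α).const_mul ε
  have hG : IntegrableOn G (Ioc (0:ℝ) 1) := hG1.add hG2
  have hF : IntegrableOn (fun x => |f x| * (α * Real.log (1/x) ^ (α-1) / x)) (Ioc (0:ℝ) 1) := by
    refine hG.mono' ((hf.abs.mul (aux_wmeas α)).aestronglyMeasurable) ?_
    refine (ae_restrict_iff' measurableSet_Ioc).2 (ae_of_all _ fun x hx => ?_)
    have hlx : 0 ≤ Real.log (1/x) := Real.log_nonneg (by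
      rw [le_div_iff₀ hx.1]; linarith [hx.2])
    have hw0 : 0 ≤ α * Real.log (1/x) ^ (α-1) / x :=
      div_nonneg (mul_nonneg hα.le (Real.rpow_nonneg hlx _)) hx.1.le
    rw [Real.norm_eq_abs, abs_of_nonneg (mul_nonneg (abs_nonneg _) hw0)]
    exact hpt x hx
  -- compare
  have hmono := setIntegral_mono_on hF hG measurableSet_Ioc hpt
  refine hmono.trans ?_
  -- compute ∫ G
  rw [hGdef, integral_add hG1 hG2, integral_const_mul, integral_const_mul, integral_const_mul,
    (aux_int hα).2]
  have hι : ∫ x in Ioc (0:ℝ) 1, indicator J (fun _ => (1:ℝ)) x ≤ ε := by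
    rw [setIntegral_indicator hmJ]
    rw [setIntegral_const, smul_eq_mul, mul_one]
    have h1 : volume (Ioc (0:ℝ) 1 ∩ J) ≤ ENNReal.ofReal ε := by
      refine (measure_mono (inter_subset_right)).trans ?_
      rw [hJdef, Real.volume_Icc]
      simp
    calc (volume (Ioc (0:ℝ) 1 ∩ J)).toReal ≤ (ENNReal.ofReal ε).toReal :=
          ENNReal.toReal_mono (by simp) h1
    _ = ε := ENNReal.toReal_ofReal hε.le
  have hgamma : α * Real.Gamma α = Real.Gamma (α+1) := (Real.Gamma_add_one hα.ne').symm
  have hΓ0 : 0 < Real.Gamma (α+1) := Real.Gamma_pos_of_pos (by linarith)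
  have h3 : K * (∫ x in Ioc (0:ℝ) 1, indicator J (fun _ => (1:ℝ)) x) ≤ K * ε :=
    mul_le_mul_of_nonneg_left hι hK0
  nlinarith [h3, hgamma]

lemma aux_ramp (b ε : ℝ) (hε : 0 < ε) (ha : 0 < b) (x : ℝ) :
    x * (max 0 (min 1 ((x-b)/ε)) / max x b) = max 0 (min 1 ((x-b)/ε)) := by
  rcases le_or_gt b x with h | h
  · rw [max_eq_left h]
    have hx : 0 < x := lt_of_lt_of_le ha h
    by_cases h0 : max 0 (min 1 ((x-b)/ε)) = 0
    · rw [h0]; simp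
    · field_simp
  · have ht : (x-b)/ε < 0 := div_neg_of_neg_of_pos (by linarith) hε
    have h0 : max 0 (min 1 ((x-b)/ε)) = 0 :=
      max_eq_left ((min_le_right _ _).trans ht.le)
    rw [h0]; simp

lemma aux_cont (b ε : ℝ) (hε : 0 < ε) (hb : 0 < b) :
    Continuous (fun x : ℝ => max 0 (min 1 ((x-b)/ε)) / max x b) := by
  apply Continuous.div
  · exact continuous_const.max (continuous_const.min (by continuity))
  · exact continuous_id.max continuous_const
  · exact fun x => (lt_max_of_lt_right hb).ne'

/-- **Polynomial approximation for Karamata's argument.** For each `α ≥ 0` there is a constant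
`C(α) < ∞`, independent of `ε`, such that for every `ε ∈ (0, 1/(2e))` there are polynomials
`P₋, P₊` vanishing at `0` with `P₋ ≤ 1_{[e^{-1},1]} ≤ P₊` on `[0,1]` and
`∫₀¹ |P±(x) - 1_{[e^{-1},1]}(x)| α (log(1/x))^{α-1} dx/x ≤ C(α) ε`. -/
theorem stmt16 (α : ℝ) (hα : 0 ≤ α) :
    ∃ C : ℝ, 0 ≤ C ∧
      ∀ ε : ℝ, ε ∈ Ioo 0 (1 / (2 * Real.exp 1)) →
        ∃ Pm Pp : Polynomial ℝ,
          Pm.eval 0 = 0 ∧ Pp.eval 0 = 0 ∧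
          (∀ x ∈ Icc (0 : ℝ) 1,
            Pm.eval x ≤ indicator (Icc (Real.exp (-1)) 1) (fun _ => (1 : ℝ)) x ∧
            indicator (Icc (Real.exp (-1)) 1) (fun _ => (1 : ℝ)) x ≤ Pp.eval x) ∧
          (∫ x in Ioc (0 : ℝ) 1,
              |Pm.eval x - indicator (Icc (Real.exp (-1)) 1) (fun _ => (1 : ℝ)) x| *
                (α * Real.log (1 / x) ^ (α - 1) / x)) ≤ C * ε ∧
          (∫ x in Ioc (0 : ℝ) 1,
              |Pp.eval x - indicator (Icc (Real.exp (-1)) 1) (fun _ => (1 : ℝ)) x| *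
                (α * Real.log (1 / x) ^ (α - 1) / x)) ≤ C * ε := by
  have hbpos : 0 < Real.exp (-1) := Real.exp_pos _
  have hind0 : ∀ x : ℝ, 0 ≤ indicator (Icc (Real.exp (-1)) 1) (fun _ => (1:ℝ)) x :=
    fun x => indicator_nonneg (fun _ _ => zero_le_one) x
  have hind1 : ∀ x : ℝ, indicator (Icc (Real.exp (-1)) 1) (fun _ => (1:ℝ)) x ≤ 1 :=
    fun x => indicator_le_self' (fun _ _ => zero_le_one) x |>.trans (by
      by_cases h : x ∈ Icc (Real.exp (-1)) 1 <;> simp [h]) |>.trans le_rfl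
  rcases eq_or_lt_of_le hα with rfl | hαpos
  · -- α = 0 : integrand vanishes
    refine ⟨1, zero_le_one, fun ε hε => ?_⟩
    refine ⟨0, Polynomial.C (Real.exp 1) * Polynomial.X, by simp, by simp, ?_, ?_, ?_⟩
    · intro x hx
      constructor
      · simpa using hind0 x
      · simp only [Polynomial.eval_mul, Polynomial.eval_C, Polynomial.eval_X]
        by_cases h : x ∈ Icc (Real.exp (-1)) 1
        · rw [indicator_of_mem h]
          have : Real.exp 1 * Real.exp (-1) = 1 := by
            rw [← Real.exp_add]; norm_num
          nlinarith [h.1, Real.exp_pos 1]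
        · rw [indicator_of_notMem h]
          exact mul_nonneg (Real.exp_pos 1).le hx.1
    · simp [hε.1.le]
    · simp [hε.1.le]
  · -- α > 0
    have hE9 : (2.7182818283:ℝ) < Real.exp 1 := Real.exp_one_gt_d9
    have hlog1 : 0 < Real.log (2*Real.exp 1/3) := Real.log_pos (by nlinarith)
    have hΓ : 0 < Real.Gamma (α+1) := Real.Gamma_pos_of_pos (by linarith)
    have hmax0 : 0 ≤ max ((Real.log (2*Real.exp 1/3)) ^ (α-1))
        ((Real.log (2*Real.exp 1)) ^ (α-1)) := le_max_of_le_left (Real.rpow_nonneg hlog1.le _)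
    refine ⟨α * (2*Real.exp 1) * max ((Real.log (2*Real.exp 1/3)) ^ (α-1))
        ((Real.log (2*Real.exp 1)) ^ (α-1)) + Real.Gamma (α+1), ?_, ?_⟩
    · have : 0 ≤ α * (2*Real.exp 1) * max ((Real.log (2*Real.exp 1/3)) ^ (α-1))
          ((Real.log (2*Real.exp 1)) ^ (α-1)) := by positivity
      linarith
    intro ε hε
    obtain ⟨hε0, hεb⟩ := hε
    have hεb' : ε < Real.exp (-1)/2 := by
      have h1 : (1:ℝ)/(2*Real.exp 1) = Real.exp (-1)/2 := by
        rw [Real.exp_neg]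
        field_simp
      linarith [h1 ▸ hεb]
    have hbε : 0 < Real.exp (-1) - ε := by linarith
    obtain ⟨q, hq⟩ := exists_polynomial_near_of_continuousOn 0 1 _
      (aux_cont (Real.exp (-1) - ε) ε hε0 hbε).continuousOn (ε/2) (by positivity)
    obtain ⟨r, hr⟩ := exists_polynomial_near_of_continuousOn 0 1 _
      (aux_cont (Real.exp (-1)) ε hε0 hbpos).continuousOn (ε/2) (by positivity)
    set b := Real.exp (-1) with hbdef
    set gp : ℝ → ℝ := fun x => max 0 (min 1 ((x-(b-ε))/ε)) / max x (b-ε) with hgp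
    set gm : ℝ → ℝ := fun x => max 0 (min 1 ((x-b)/ε)) / max x b with hgm
    set hp : ℝ → ℝ := fun x => max 0 (min 1 ((x-(b-ε))/ε)) with hhp
    set hm : ℝ → ℝ := fun x => max 0 (min 1 ((x-b)/ε)) with hhm
    set ind : ℝ → ℝ := indicator (Icc b 1) (fun _ => (1:ℝ)) with hinddef
    have hrampp : ∀ x : ℝ, x * gp x = hp x := fun x => aux_ramp (b-ε) ε hε0 hbε x
    have hrampm : ∀ x : ℝ, x * gm x = hm x := fun x => aux_ramp b ε hε0 hbpos x
    have hp01 : ∀ x : ℝ, 0 ≤ hp x ∧ hp x ≤ 1 := fun x =>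
      ⟨le_max_left _ _, max_le (by linarith) (min_le_left _ _)⟩
    have hm01 : ∀ x : ℝ, 0 ≤ hm x ∧ hm x ≤ 1 := fun x =>
      ⟨le_max_left _ _, max_le (by linarith) (min_le_left _ _)⟩
    -- hp = 1 for x ≥ b ; hp = 0 for x < b - ε
    have hp_one : ∀ x : ℝ, b ≤ x → hp x = 1 := by
      intro x hx
      have : (1:ℝ) ≤ (x-(b-ε))/ε := by rw [le_div_iff₀ hε0]; linarith
      rw [hhp]
      simp only [min_eq_left this]
      exact max_eq_right zero_le_one
    have hp_zero : ∀ x : ℝ, x < b - ε → hp x = 0 := by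
      intro x hx
      have : (x-(b-ε))/ε < 0 := div_neg_of_neg_of_pos (by linarith) hε0
      exact max_eq_left ((min_le_right _ _).trans this.le)
    have hm_one : ∀ x : ℝ, b + ε ≤ x → hm x = 1 := by
      intro x hx
      have : (1:ℝ) ≤ (x-b)/ε := by rw [le_div_iff₀ hε0]; linarith
      rw [hhm]
      simp only [min_eq_left this]
      exact max_eq_right zero_le_one
    have hm_zero : ∀ x : ℝ, x < b → hm x = 0 := by
      intro x hx
      have : (x-b)/ε < 0 := div_neg_of_neg_of_pos (by linarith) hε0
      exact max_eq_left ((min_le_right _ _).trans this.le)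
    -- indicator values
    have hind_mem : ∀ x : ℝ, x ∈ Icc b 1 → ind x = 1 := fun x hx => indicator_of_mem hx _
    have hind_not : ∀ x : ℝ, x ∉ Icc b 1 → ind x = 0 := fun x hx => indicator_of_notMem hx _
    -- evaluation formulas
    have hPpev : ∀ x : ℝ, (Polynomial.X * (q + Polynomial.C (ε/2))).eval x
        = x * (q.eval x + ε/2) := by intro x; simp
    have hPmev : ∀ x : ℝ, (Polynomial.X * (r - Polynomial.C (ε/2))).eval x
        = x * (r.eval x - ε/2) := by intro x; simp
    -- sandwich bounds on [0,1]
    have hPp_ge : ∀ x ∈ Icc (0:ℝ) 1, ind x ≤ x * (q.eval x + ε/2) := by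
      intro x hx
      have h1 : ind x ≤ hp x := by
        by_cases hxm : x ∈ Icc b 1
        · rw [hind_mem x hxm, hp_one x hxm.1]
        · rw [hind_not x hxm]; exact (hp01 x).1
      have h2 : gp x ≤ q.eval x + ε/2 := by
        have := abs_lt.1 (hq x hx); linarith [this.1]
      calc ind x ≤ hp x := h1
      _ = x * gp x := (hrampp x).symm
      _ ≤ x * (q.eval x + ε/2) := mul_le_mul_of_nonneg_left h2 hx.1
    have hPp_ub : ∀ x ∈ Icc (0:ℝ) 1,
        x * (q.eval x + ε/2) - ind x ≤ indicator (Icc (b-ε) ((b-ε)+ε)) (fun _ => (1:ℝ)) x + ε * x := by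
      intro x hx
      have hbb : (b-ε)+ε = b := by ring
      have h2 : q.eval x + ε/2 ≤ gp x + ε := by
        have := abs_lt.1 (hq x hx); linarith [this.2]
      have h3 : x * (q.eval x + ε/2) ≤ hp x + ε * x := by
        calc x * (q.eval x + ε/2) ≤ x * (gp x + ε) := mul_le_mul_of_nonneg_left h2 hx.1
        _ = x * gp x + ε * x := by ring
        _ = hp x + ε * x := by rw [hrampp x]
      have h4 : hp x - ind x ≤ indicator (Icc (b-ε) ((b-ε)+ε)) (fun _ => (1:ℝ)) x := by
        rw [hbb]
        by_cases hxJ : x ∈ Icc (b-ε) b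
        · rw [indicator_of_mem hxJ]
          linarith [(hp01 x).2, hind0 x]
        · rw [indicator_of_notMem hxJ]
          rcases not_and_or.1 hxJ with h | h
          · push_neg at h
            rw [hp_zero x (by simpa using h)]
            linarith [hind0 x]
          · push_neg at h
            rw [hp_one x h.le, hind_mem x ⟨h.le, hx.2⟩]
            norm_num
      linarith
    have hPm_le : ∀ x ∈ Icc (0:ℝ) 1, x * (r.eval x - ε/2) ≤ ind x := by
      intro x hx
      have h2 : r.eval x - ε/2 ≤ gm x := by
        have := abs_lt.1 (hr x hx); linarith [this.2]
      have h1 : hm x ≤ ind x := by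
        by_cases hxm : x ∈ Icc b 1
        · rw [hind_mem x hxm]; exact (hm01 x).2
        · rcases not_and_or.1 hxm with h | h
          · push_neg at h
            rw [hind_not x hxm, hm_zero x h]
          · exact absurd hx.2 (by push_neg at h ⊢; linarith [h])
      calc x * (r.eval x - ε/2) ≤ x * gm x := mul_le_mul_of_nonneg_left h2 hx.1
      _ = hm x := hrampm x
      _ ≤ ind x := h1
    have hPm_lb : ∀ x ∈ Icc (0:ℝ) 1,
        ind x - x * (r.eval x - ε/2) ≤ indicator (Icc b (b+ε)) (fun _ => (1:ℝ)) x + ε * x := by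
      intro x hx
      have h2 : gm x - ε ≤ r.eval x - ε/2 := by
        have := abs_lt.1 (hr x hx); linarith [this.1]
      have h3 : hm x - ε * x ≤ x * (r.eval x - ε/2) := by
        calc hm x - ε * x = x * gm x - ε * x := by rw [hrampm x]
        _ = x * (gm x - ε) := by ring
        _ ≤ x * (r.eval x - ε/2) := mul_le_mul_of_nonneg_left h2 hx.1
      have h4 : ind x - hm x ≤ indicator (Icc b (b+ε)) (fun _ => (1:ℝ)) x := by
        by_cases hxJ : x ∈ Icc b (b+ε)
        · rw [indicator_of_mem hxJ]
          linarith [(hm01 x).1, hind1 x]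
        · rw [indicator_of_notMem hxJ]
          rcases not_and_or.1 hxJ with h | h
          · push_neg at h
            rw [hind_not x (fun hc => absurd hc.1 (by push_neg; exact h))]
            linarith [(hm01 x).1]
          · push_neg at h
            rw [hm_one x h.le]
            linarith [hind1 x]
      linarith
    -- conclude
    refine ⟨Polynomial.X * (r - Polynomial.C (ε/2)), Polynomial.X * (q + Polynomial.C (ε/2)),
      by simp, by simp, ?_, ?_, ?_⟩
    · intro x hx
      refine ⟨?_, ?_⟩
      · rw [hPmev x]; exact hPm_le x hx
      · rw [hPpev x]; exact hPp_ge x hx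
    · -- lower integral
      have hmeas : Measurable (fun x : ℝ =>
          (Polynomial.X * (r - Polynomial.C (ε/2))).eval x - ind x) :=
        ((Polynomial.X * (r - Polynomial.C (ε/2))).continuous_aeval.measurable).sub
          (measurable_const.indicator measurableSet_Icc)
      have := aux_key α hαpos ε b hε0 (by linarith) (by rw [← hbdef]; linarith)
        _ hmeas ?_
      · exact this.trans (by nlinarith [hΓ, hmax0])
      · intro x hx
        have hx' : x ∈ Icc (0:ℝ) 1 := ⟨hx.1.le, hx.2⟩
        rw [hPmev x, abs_of_nonpos (by linarith [hPm_le x hx'])]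
        have := hPm_lb x hx'
        linarith
    · -- upper integral
      have hmeas : Measurable (fun x : ℝ =>
          (Polynomial.X * (q + Polynomial.C (ε/2))).eval x - ind x) :=
        ((Polynomial.X * (q + Polynomial.C (ε/2))).continuous_aeval.measurable).sub
          (measurable_const.indicator measurableSet_Icc)
      have := aux_key α hαpos ε (b-ε) hε0 (by linarith) (by rw [← hbdef]; linarith)
        _ hmeas ?_
      · exact this.trans (by nlinarith [hΓ, hmax0])
      · intro x hx
        have hx' : x ∈ Icc (0:ℝ) 1 := ⟨hx.1.le, hx.2⟩
        rw [hPpev x, abs_of_nonneg (by linarith [hPp_ge x hx'])]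
        have := hPp_ub x hx'
        linarith
end
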